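/- arXiv:1710.11149 — 3 statements merged into one kernel-verified Lean document; each statement's English description precedes it below -/
import Mathlib

section
/- For the discrete-time SIS dynamics x_i^{k+1} = x_i^k + h((1 - x_i^k) Σ_j β_{ij} x_j^k - δ_i x_i^k), if x_i^0 ∈ [0,1] for all i, δ_i ≥ 0, β_{ij} ≥ 0, h ≥ 0, h δ_i ≤ 1, and h Σ_{j≠i} β_{ij} ≤ 1 (and h β_{ii} ≤ 1 so that h Σ_j β_{ij} x_j^k ≤ 1 whenever all x_j^k ∈ [0,1]), then x_i^k ∈ [0,1] for all i and all k ≥ 0; i.e., the unit cube [0,1]^n is positively invariant. -/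
open Matrix

/-- Positive invariance of the unit cube for the discrete-time SIS model. -/
theorem sis_unit_cube_invariant (n : ℕ) (B : Matrix (Fin n) (Fin n) ℝ)
    (δ : Fin n → ℝ) (h : ℝ) (x : ℕ → Fin n → ℝ)
    (hB : ∀ i j, 0 ≤ B i j) (hδ : ∀ i, 0 ≤ δ i) (hh : 0 ≤ h)
    (hhδ : ∀ i, h * δ i ≤ 1) (hhB : ∀ i, h * ∑ j, B i j ≤ 1)
    (hx0 : ∀ i, x 0 i ∈ Set.Icc (0 : ℝ) 1)
    (hdyn : ∀ k i, x (k + 1) i =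
      x k i + h * ((1 - x k i) * (∑ j, B i j * x k j) - δ i * x k i)) :
    ∀ k i, x k i ∈ Set.Icc (0 : ℝ) 1 := by
  intro k
  induction k with
  | zero => exact hx0
  | succ k ih =>
    intro i
    obtain ⟨h0, h1⟩ := ih i
    have hS0 : (0:ℝ) ≤ ∑ j, B i j * x k j :=
      Finset.sum_nonneg fun j _ => mul_nonneg (hB i j) ((ih j).1)
    have hSB : ∑ j, B i j * x k j ≤ ∑ j, B i j := by
      apply Finset.sum_le_sum
      intro j _
      nlinarith [(ih j).1, (ih j).2, hB i j]
    have hhS : h * ∑ j, B i j * x k j ≤ 1 :=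
      le_trans (by nlinarith) (hhB i)
    rw [hdyn k i]
    constructor
    · nlinarith [hhδ i, mul_nonneg hh hS0]
    · nlinarith [mul_nonneg (mul_nonneg hh (hδ i)) h0]
end

section
/- Let M be an irreducible nonnegative n×n real matrix whose spectral radius (Perron eigenvalue) equals 1. Then there exists a positive diagonal matrix P such that Mᵀ P M − P is negative semidefinite. -/
open Matrix Finset Filter
open scoped NNReal ENNReal

attribute [local instance] Matrix.linftyOpNormedRing Matrix.linftyOpNormedAlgebra
  Matrix.linfty_opNormOneClass

variable {n : ℕ}

private lemma pow_entry_nonneg (M : Matrix (Fin n) (Fin n) ℝ) (hM : ∀ i j, 0 ≤ M i j) :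
    ∀ k i j, 0 ≤ (M ^ k) i j := by
  intro k
  induction k with
  | zero => intro i j; by_cases h : i = j <;> simp [pow_zero, Matrix.one_apply, h]
  | succ m ih =>
    intro i j
    rw [pow_succ, Matrix.mul_apply]
    exact Finset.sum_nonneg fun l _ => mul_nonneg (ih i l) (hM l j)

private lemma mulVec_mono (M : Matrix (Fin n) (Fin n) ℝ) (hM : ∀ i j, 0 ≤ M i j)
    {x y : Fin n → ℝ} (h : ∀ j, x j ≤ y j) : ∀ i, (M *ᵥ x) i ≤ (M *ᵥ y) i := by
  intro i
  simp only [Matrix.mulVec, dotProduct]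
  apply Finset.sum_le_sum
  intro j _
  exact mul_le_mul_of_nonneg_left (h j) (hM i j)

private lemma exists_pos_comm_matrix (M : Matrix (Fin n) (Fin n) ℝ) (hM : ∀ i j, 0 ≤ M i j)
    (hirr : ∀ i j, ∃ k : ℕ, 0 < (M ^ k) i j) :
    ∃ B : Matrix (Fin n) (Fin n) ℝ, (∀ i j, 0 < B i j) ∧ M * B = B * M := by
  have hch : ∀ p : Fin n × Fin n, ∃ k : ℕ, 0 < (M ^ k) p.1 p.2 := fun p => hirr p.1 p.2
  choose f hf using hch
  set K := Finset.univ.sup f with hK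
  refine ⟨∑ k ∈ Finset.range (K + 1), M ^ k, ?_, ?_⟩
  · intro i j
    rw [Matrix.sum_apply]
    have hmem : f (i, j) ∈ Finset.range (K + 1) := by
      rw [Finset.mem_range]
      exact Nat.lt_succ_of_le (Finset.le_sup (Finset.mem_univ (i, j)))
    exact Finset.sum_pos' (fun k _ => pow_entry_nonneg M hM k i j)
      ⟨f (i, j), hmem, hf (i, j)⟩
  · rw [Finset.mul_sum, Finset.sum_mul]
    refine Finset.sum_congr rfl fun k _ => ?_
    rw [← pow_succ', ← pow_succ]

private lemma map_pow_ofReal (M : Matrix (Fin n) (Fin n) ℝ) (m : ℕ) :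
    (M.map Complex.ofReal) ^ m = (M ^ m).map Complex.ofReal := by
  induction m with
  | zero => simp [Matrix.map_one]
  | succ k ih =>
    rw [pow_succ, pow_succ, ih]
    ext i j
    simp [Matrix.mul_apply, Matrix.map_apply]

private lemma perron_exists (hn : 0 < n) (M : Matrix (Fin n) (Fin n) ℝ)
    (hM : ∀ i j, 0 ≤ M i j) (hirr : ∀ i j, ∃ k : ℕ, 0 < (M ^ k) i j)
    (hρ : spectralRadius ℂ (M.map Complex.ofReal) = 1) :
    ∃ v : Fin n → ℝ, (∀ i, 0 < v i) ∧ M *ᵥ v = v := by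
  have hne : Nonempty (Fin n) := ⟨⟨0, hn⟩⟩
  set A := M.map Complex.ofReal with hA
  -- get eigenvalue of modulus 1
  obtain ⟨lam, hlam_mem, hlam_norm⟩ := spectrum.exists_nnnorm_eq_spectralRadius A
  rw [hρ] at hlam_norm
  have habs : ‖lam‖ = 1 := by
    have h1 : ‖lam‖₊ = 1 := by exact_mod_cast hlam_norm
    simpa using congrArg NNReal.toReal h1
  -- eigenvector
  obtain ⟨x, hx0, hxe⟩ : ∃ x : Fin n → ℂ, x ≠ 0 ∧ A.mulVec x = lam • x := by
    rw [← AlgEquiv.spectrum_eq (Matrix.toLinAlgEquiv' (R := ℂ) (n := Fin n)),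
      ← Module.End.hasEigenvalue_iff_mem_spectrum] at hlam_mem
    obtain ⟨x, hx⟩ := hlam_mem.exists_hasEigenvector
    refine ⟨x, hx.2, ?_⟩
    have := Module.End.mem_eigenspace_iff.mp hx.1
    rwa [Matrix.toLinAlgEquiv'_apply] at this
  set w : Fin n → ℝ := fun i => ‖x i‖ with hw
  have hw_nonneg : ∀ i, 0 ≤ w i := fun i => norm_nonneg _
  obtain ⟨j0, hj0⟩ : ∃ j, 0 < w j := by
    obtain ⟨j, hj⟩ := Function.ne_iff.mp hx0
    exact ⟨j, norm_pos_iff.mpr hj⟩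
  have hsub : ∀ i, w i ≤ (M *ᵥ w) i := by
    intro i
    have h1 : w i = ‖(A *ᵥ x) i‖ := by
      rw [hxe]
      simp [hw, Pi.smul_apply, norm_smul, habs]
    rw [h1]
    have h2 : (A *ᵥ x) i = ∑ j, (M i j : ℂ) * x j := by
      simp [hA, Matrix.mulVec, dotProduct, Matrix.map_apply]
    rw [h2]
    refine (norm_sum_le _ _).trans ?_
    apply le_of_eq
    simp only [Matrix.mulVec, dotProduct]
    refine Finset.sum_congr rfl fun j _ => ?_
    rw [norm_mul, Complex.norm_real, Real.norm_eq_abs, abs_of_nonneg (hM i j)]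
  obtain ⟨B, hB_pos, hBM⟩ := exists_pos_comm_matrix M hM hirr
  set v : Fin n → ℝ := B *ᵥ w with hv
  have hv_pos : ∀ i, 0 < v i := by
    intro i
    show 0 < ∑ j, B i j * w j
    refine Finset.sum_pos' (fun j _ => mul_nonneg (hB_pos i j).le (hw_nonneg j)) ?_
    exact ⟨j0, Finset.mem_univ _, mul_pos (hB_pos i j0) hj0⟩
  have hMv : M *ᵥ v = B *ᵥ (M *ᵥ w) := by
    rw [hv, Matrix.mulVec_mulVec, Matrix.mulVec_mulVec, hBM]
  by_cases heq : M *ᵥ w = w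
  · exact ⟨v, hv_pos, by rw [hMv, heq]⟩
  · -- strict increase case leads to contradiction
    exfalso
    set y : Fin n → ℝ := M *ᵥ w - w with hy
    have hy_nonneg : ∀ i, 0 ≤ y i := fun i => sub_nonneg.mpr (hsub i)
    have hy0 : y ≠ 0 := fun h => heq (by rw [← sub_eq_zero]; exact h)
    obtain ⟨j1, hj1⟩ : ∃ j, 0 < y j := by
      obtain ⟨j, hj⟩ := Function.ne_iff.mp hy0
      exact ⟨j, lt_of_le_of_ne (hy_nonneg j) (Ne.symm hj)⟩
    set z : Fin n → ℝ := B *ᵥ y with hz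
    have hz_pos : ∀ i, 0 < z i := by
      intro i
      show 0 < ∑ j, B i j * y j
      refine Finset.sum_pos' (fun j _ => mul_nonneg (hB_pos i j).le (hy_nonneg j)) ?_
      exact ⟨j1, Finset.mem_univ _, mul_pos (hB_pos i j1) hj1⟩
    have hMvz : ∀ i, (M *ᵥ v) i = v i + z i := by
      intro i
      rw [hMv]
      have hwy : M *ᵥ w = w + y := by funext j; simp [hy]
      rw [hwy, Matrix.mulVec_add]
      simp [hv, hz]
    clear_value v z
    -- c : uniform growth rate
    set c : ℝ := Finset.univ.inf' Finset.univ_nonempty (fun i => z i / v i) with hc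
    have hc_pos : 0 < c := by
      rw [hc]
      apply (Finset.lt_inf'_iff _).mpr
      exact fun i _ => div_pos (hz_pos i) (hv_pos i)
    have hgrow : ∀ i, (1 + c) * v i ≤ (M *ᵥ v) i := by
      intro i
      rw [hMvz i, add_mul, one_mul]
      have h6 : c ≤ z i / v i := Finset.inf'_le _ (Finset.mem_univ i)
      have h5 : c * v i ≤ z i := (le_div_iff₀ (hv_pos i)).mp h6
      linarith
    have hpow : ∀ m : ℕ, ∀ i, (1 + c) ^ m * v i ≤ ((M ^ m) *ᵥ v) i := by
      intro m
      induction m with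
      | zero => intro i; simp
      | succ k ih =>
        intro i
        have h1 : (M ^ (k+1)) *ᵥ v = M *ᵥ ((M ^ k) *ᵥ v) := by
          rw [Matrix.mulVec_mulVec, ← pow_succ']
        rw [congrFun h1 i]
        have h2 : ∀ j, ((1 + c) ^ k • v) j ≤ ((M ^ k) *ᵥ v) j := fun j => by
          simpa using ih j
        have h3 := mulVec_mono M hM h2 i
        have h4 : (M *ᵥ ((1 + c) ^ k • v)) i = (1 + c) ^ k * (M *ᵥ v) i := by
          rw [Matrix.mulVec_smul]; simp
        calc (1 + c) ^ (k+1) * v i = (1 + c) ^ k * ((1 + c) * v i) := by ring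
          _ ≤ (1 + c) ^ k * (M *ᵥ v) i := by
              apply mul_le_mul_of_nonneg_left (hgrow i)
              positivity
          _ = (M *ᵥ ((1 + c) ^ k • v)) i := h4.symm
          _ ≤ (M *ᵥ ((M ^ k) *ᵥ v)) i := h3
    -- norm lower bound
    set i0 : Fin n := ⟨0, hn⟩ with hi0
    set vmax : ℝ := Finset.univ.sup' Finset.univ_nonempty v with hvmax
    set vmin : ℝ := Finset.univ.inf' Finset.univ_nonempty v with hvmin
    have hvmax_pos : 0 < vmax := lt_of_lt_of_le (hv_pos i0) (Finset.le_sup' _ (Finset.mem_univ i0))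
    have hvmin_pos : 0 < vmin := by
      rw [hvmin]
      exact (Finset.lt_inf'_iff _).mpr fun i _ => hv_pos i
    set C : ℝ := vmin / vmax with hC
    have hC_pos : 0 < C := div_pos hvmin_pos hvmax_pos
    have hnorm : ∀ m : ℕ, C * (1 + c) ^ m ≤ ‖A ^ m‖ := by
      intro m
      rw [map_pow_ofReal]
      set N := M ^ m with hN
      have hN_nonneg : ∀ i j, 0 ≤ N i j := fun i j => pow_entry_nonneg M hM m i j
      have step1 : ((∑ j, ‖(N.map Complex.ofReal) i0 j‖₊ : ℝ≥0) : ℝ)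
          ≤ ‖N.map Complex.ofReal‖ := by
        rw [Matrix.linfty_opNorm_def]
        exact NNReal.coe_le_coe.mpr (Finset.le_sup
          (f := fun i => ∑ j, ‖N.map Complex.ofReal i j‖₊) (Finset.mem_univ i0))
      have step2 : ((∑ j, ‖(N.map Complex.ofReal) i0 j‖₊ : ℝ≥0) : ℝ) = ∑ j, N i0 j := by
        push_cast
        refine Finset.sum_congr rfl fun j _ => ?_
        rw [Matrix.map_apply, Complex.norm_real, Real.norm_eq_abs,
          abs_of_nonneg (hN_nonneg i0 j)]
      have step3 : (N *ᵥ v) i0 / vmax ≤ ∑ j, N i0 j := by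
        rw [div_le_iff₀ hvmax_pos, Finset.sum_mul]
        simp only [Matrix.mulVec, dotProduct]
        refine Finset.sum_le_sum fun j _ => ?_
        have hvj : v j ≤ vmax := Finset.le_sup' _ (Finset.mem_univ j)
        exact mul_le_mul_of_nonneg_left hvj (hN_nonneg i0 j)
      have step4 : C * (1 + c) ^ m ≤ (N *ᵥ v) i0 / vmax := by
        rw [hC, div_mul_eq_mul_div, div_le_div_iff₀ hvmax_pos hvmax_pos]
        have h5 : (1 + c) ^ m * vmin ≤ (N *ᵥ v) i0 := by
          refine le_trans ?_ (hpow m i0)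
          have : vmin ≤ v i0 := Finset.inf'_le _ (Finset.mem_univ i0)
          exact mul_le_mul_of_nonneg_left this (by positivity)
        nlinarith [hvmax_pos]
      calc C * (1 + c) ^ m ≤ (N *ᵥ v) i0 / vmax := step4
        _ ≤ ∑ j, N i0 j := step3
        _ = _ := step2.symm
        _ ≤ _ := step1
    -- Gelfand's formula contradiction
    have hg := spectrum.pow_norm_pow_one_div_tendsto_nhds_spectralRadius A
    rw [hρ] at hg
    have t1 : Filter.Tendsto (fun m : ℕ => (1 / m : ℝ)) Filter.atTop (nhds 0) :=
      tendsto_one_div_atTop_nhds_zero_nat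
    have t2 : Filter.Tendsto (fun m : ℕ => C ^ (1 / m : ℝ)) Filter.atTop (nhds 1) := by
      have hcont : ContinuousAt (fun e : ℝ => C ^ e) 0 :=
        Real.continuousAt_const_rpow hC_pos.ne'
      have := hcont.tendsto.comp t1
      simpa [Real.rpow_zero, Function.comp_def] using this
    have t3 : Filter.Tendsto (fun m : ℕ => C ^ (1 / m : ℝ) * (1 + c)) Filter.atTop
        (nhds (1 + c)) := by
      simpa using t2.mul_const (1 + c)
    have t4 : Filter.Tendsto (fun m : ℕ => ENNReal.ofReal (C ^ (1 / m : ℝ) * (1 + c)))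
        Filter.atTop (nhds (ENNReal.ofReal (1 + c))) :=
      (ENNReal.continuous_ofReal.tendsto _).comp t3
    have hev : ∀ᶠ m : ℕ in Filter.atTop,
        ENNReal.ofReal (C ^ (1 / m : ℝ) * (1 + c)) ≤ ENNReal.ofReal (‖A ^ m‖ ^ (1 / m : ℝ)) := by
      filter_upwards [Filter.eventually_ge_atTop 1] with m hm
      apply ENNReal.ofReal_le_ofReal
      have hmne : (m : ℝ) ≠ 0 := Nat.cast_ne_zero.mpr (by omega)
      have heq2 : C ^ (1 / m : ℝ) * (1 + c) = (C * (1 + c) ^ m) ^ (1 / m : ℝ) := by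
        rw [Real.mul_rpow hC_pos.le (by positivity), ← Real.rpow_natCast (1 + c) m,
          ← Real.rpow_mul (by positivity)]
        rw [mul_one_div_cancel hmne, Real.rpow_one]
      rw [heq2]
      exact Real.rpow_le_rpow (by positivity) (hnorm m) (by positivity)
    have hle : ENNReal.ofReal (1 + c) ≤ 1 := le_of_tendsto_of_tendsto t4 hg hev
    rw [ENNReal.ofReal_le_one] at hle
    linarith

private lemma spectrum_transpose (A : Matrix (Fin n) (Fin n) ℂ) : spectrum ℂ Aᵀ = spectrum ℂ A := by
  ext lam
  simp only [spectrum.mem_iff, not_iff_not]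
  rw [show algebraMap ℂ (Matrix (Fin n) (Fin n) ℂ) lam - Aᵀ
      = (algebraMap ℂ (Matrix (Fin n) (Fin n) ℂ) lam - A)ᵀ by
    simp [Matrix.transpose_sub, Matrix.algebraMap_eq_diagonal]]
  exact Matrix.isUnit_transpose _

def MatrixIrreducible {n : ℕ} (M : Matrix (Fin n) (Fin n) ℝ) : Prop :=
  ∀ i j, ∃ k : ℕ, 0 < (M ^ k) i j

/-- For an irreducible nonnegative matrix with spectral radius 1, there exists a
positive diagonal matrix `P` such that `MᵀPM - P` is negative semidefinite. -/
theorem exists_pos_diag_neg_semidef (n : ℕ) (hn : 0 < n)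
    (M : Matrix (Fin n) (Fin n) ℝ)
    (hM : ∀ i j, 0 ≤ M i j) (hirr : MatrixIrreducible M)
    (hρ : spectralRadius ℂ (M.map Complex.ofReal) = 1) :
    ∃ p : Fin n → ℝ, (∀ i, 0 < p i) ∧
      ∀ v : Fin n → ℝ,
        v ⬝ᵥ ((Mᵀ * Matrix.diagonal p * M - Matrix.diagonal p).mulVec v) ≤ 0 := by
  obtain ⟨v, hv_pos, hv_eig⟩ := perron_exists hn M hM hirr hρ
  have hMT : ∀ i j, 0 ≤ Mᵀ i j := fun i j => hM j i
  have hirrT : ∀ i j, ∃ k : ℕ, 0 < (Mᵀ ^ k) i j := by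
    intro i j
    obtain ⟨k, hk⟩ := hirr j i
    exact ⟨k, by simpa [← Matrix.transpose_pow, Matrix.transpose_apply] using hk⟩
  have hρT : spectralRadius ℂ (Mᵀ.map Complex.ofReal) = 1 := by
    have hmap : Mᵀ.map Complex.ofReal = (M.map Complex.ofReal)ᵀ := rfl
    rw [hmap]
    unfold spectralRadius
    rw [spectrum_transpose]
    exact hρ
  obtain ⟨u, hu_pos, hu_eig⟩ := perron_exists hn Mᵀ hMT hirrT hρT
  set p : Fin n → ℝ := fun i => u i / v i with hp
  have hp_pos : ∀ i, 0 < p i := fun i => div_pos (hu_pos i) (hv_pos i)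
  refine ⟨p, hp_pos, ?_⟩
  intro x
  -- rewrite the quadratic form
  have hform : x ⬝ᵥ ((Mᵀ * Matrix.diagonal p * M - Matrix.diagonal p).mulVec x)
      = (∑ i, p i * ((M *ᵥ x) i) ^ 2) - ∑ i, p i * (x i) ^ 2 := by
    rw [Matrix.sub_mulVec, dotProduct_sub]
    congr 1
    · rw [Matrix.mul_assoc, ← Matrix.mulVec_mulVec, ← Matrix.mulVec_mulVec,
        Matrix.dotProduct_mulVec x Mᵀ, Matrix.vecMul_transpose]
      simp only [dotProduct, Matrix.mulVec_diagonal]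
      exact Finset.sum_congr rfl fun i _ => by ring
    · simp only [dotProduct, Matrix.mulVec_diagonal]
      exact Finset.sum_congr rfl fun i _ => by ring
  rw [hform, sub_nonpos]
  -- key Cauchy–Schwarz step
  have hrow : ∀ i, ((M *ᵥ x) i) ^ 2 ≤ v i * ∑ j, M i j * (x j) ^ 2 / v j := by
    intro i
    have h1 : ((M *ᵥ x) i) ^ 2 ≤ (∑ j, M i j * |x j|) ^ 2 := by
      have habs : |(M *ᵥ x) i| ≤ ∑ j, M i j * |x j| := by
        simp only [Matrix.mulVec, dotProduct]
        refine (Finset.abs_sum_le_sum_abs _ _).trans ?_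
        refine Finset.sum_le_sum fun j _ => ?_
        rw [abs_mul, abs_of_nonneg (hM i j)]
      calc ((M *ᵥ x) i) ^ 2 = |(M *ᵥ x) i| ^ 2 := (sq_abs _).symm
        _ ≤ (∑ j, M i j * |x j|) ^ 2 := by
            apply pow_le_pow_left₀ (abs_nonneg _) habs
    have h2 : (∑ j, M i j * |x j|) ^ 2
        ≤ (∑ j, M i j * v j) * ∑ j, M i j * (x j) ^ 2 / v j := by
      refine Finset.sum_sq_le_sum_mul_sum_of_sq_eq_mul _
        (fun j _ => mul_nonneg (hM i j) (hv_pos j).le)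
        (fun j _ => div_nonneg (mul_nonneg (hM i j) (sq_nonneg _)) (hv_pos j).le)
        (fun j _ => ?_)
      rw [mul_pow, sq_abs]
      field_simp [(hv_pos j).ne']
    have h3 : ∑ j, M i j * v j = v i := congrFun hv_eig i
    calc ((M *ᵥ x) i) ^ 2 ≤ (∑ j, M i j * v j) * ∑ j, M i j * (x j) ^ 2 / v j :=
          h1.trans h2
      _ = v i * ∑ j, M i j * (x j) ^ 2 / v j := by rw [h3]
  calc ∑ i, p i * ((M *ᵥ x) i) ^ 2
      ≤ ∑ i, u i * ∑ j, M i j * (x j) ^ 2 / v j := by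
        refine Finset.sum_le_sum fun i _ => ?_
        have := mul_le_mul_of_nonneg_left (hrow i) (hp_pos i).le
        calc p i * ((M *ᵥ x) i) ^ 2 ≤ p i * (v i * ∑ j, M i j * (x j) ^ 2 / v j) := this
          _ = u i * ∑ j, M i j * (x j) ^ 2 / v j := by
              rw [hp]
              field_simp
              rw [mul_assoc, mul_left_comm, mul_div_cancel_left₀ _ (hv_pos i).ne']
    _ = ∑ j, (∑ i, M i j * u i) * ((x j) ^ 2 / v j) := by
        simp_rw [Finset.mul_sum]
        rw [Finset.sum_comm]
        refine Finset.sum_congr rfl fun j _ => ?_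
        rw [Finset.sum_mul]
        refine Finset.sum_congr rfl fun i _ => by ring
    _ = ∑ j, p j * (x j) ^ 2 := by
        refine Finset.sum_congr rfl fun j _ => ?_
        have : ∑ i, M i j * u i = u j := by
          have := congrFun hu_eig j
          simp only [Matrix.mulVec, dotProduct, Matrix.transpose_apply] at this
          rw [← this]
        rw [this, hp]
        ring
end

section
/- Let S be a symmetric n×n real matrix such that Sv = 0 for some vector v with all entries strictly positive, and suppose all off-diagonal entries of S are nonnegative (S is a symmetric Metzler-type matrix). Then the largest eigenvalue of S is 0, i.e., S is negative semidefinite. -/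
open Matrix

/-- A symmetric matrix with nonnegative off-diagonal entries that annihilates a
strictly positive vector is negative semidefinite. -/
theorem symm_metzler_neg_semidef (n : ℕ) (S : Matrix (Fin n) (Fin n) ℝ)
    (hsymm : Sᵀ = S)
    (hoff : ∀ i j, i ≠ j → 0 ≤ S i j)
    (v : Fin n → ℝ) (hv : ∀ i, 0 < v i)
    (hSv : S.mulVec v = 0) :
    ∀ x : Fin n → ℝ, x ⬝ᵥ S.mulVec x ≤ 0 := by
  intro x
  have hvne : ∀ i, v i ≠ 0 := fun i => (hv i).ne'
  set y : Fin n → ℝ := fun i => x i / v i with hy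
  have hx : ∀ i, x i = v i * y i := by
    intro i; simp only [hy]; rw [mul_div_cancel₀ _ (hvne i)]
  have hrow : ∀ i, ∑ j, S i j * v j = 0 := by
    intro i
    have := congrFun hSv i
    simpa [Matrix.mulVec, dotProduct] using this
  have hsym : ∀ i j, S i j = S j i := by
    intro i j
    have := congrFun (congrFun hsymm j) i
    simpa [Matrix.transpose_apply] using this
  have hcol : ∀ j, ∑ i, S i j * v i = 0 := by
    intro j
    calc ∑ i, S i j * v i = ∑ i, S j i * v i := by
          exact Finset.sum_congr rfl fun i _ => by rw [hsym i j]
      _ = 0 := hrow j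
  have key : x ⬝ᵥ S.mulVec x = ∑ i, ∑ j, S i j * v i * v j * (y i * y j) := by
    simp only [dotProduct, Matrix.mulVec]
    refine Finset.sum_congr rfl fun i _ => ?_
    rw [Finset.mul_sum]
    refine Finset.sum_congr rfl fun j _ => ?_
    rw [hx i, hx j]; ring
  rw [key]
  have step : ∑ i, ∑ j, S i j * v i * v j * (y i * y j)
      = ((∑ i, ∑ j, (S i j * v j) * (v i * y i ^ 2))
        + (∑ i, ∑ j, (S i j * v i) * (v j * y j ^ 2))
        - (∑ i, ∑ j, S i j * v i * v j * (y i - y j) ^ 2)) / 2 := by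
    rw [← Finset.sum_add_distrib, ← Finset.sum_sub_distrib, Finset.sum_div]
    refine Finset.sum_congr rfl fun i _ => ?_
    rw [← Finset.sum_add_distrib, ← Finset.sum_sub_distrib, Finset.sum_div]
    refine Finset.sum_congr rfl fun j _ => ?_
    ring
  rw [step]
  have hA : (∑ i, ∑ j, (S i j * v j) * (v i * y i ^ 2)) = 0 := by
    refine Finset.sum_eq_zero fun i _ => ?_
    rw [← Finset.sum_mul, hrow i, zero_mul]
  have hB : (∑ i, ∑ j, (S i j * v i) * (v j * y j ^ 2)) = 0 := by
    rw [Finset.sum_comm]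
    refine Finset.sum_eq_zero fun j _ => ?_
    rw [← Finset.sum_mul, hcol j, zero_mul]
  have hC : 0 ≤ ∑ i, ∑ j, S i j * v i * v j * (y i - y j) ^ 2 := by
    refine Finset.sum_nonneg fun i _ => Finset.sum_nonneg fun j _ => ?_
    rcases eq_or_ne i j with rfl | hij
    · simp
    · exact mul_nonneg (mul_nonneg (mul_nonneg (hoff i j hij) (hv i).le) (hv j).le)
        (sq_nonneg _)
  rw [hA, hB]
  linarith
end
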